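/- Let l ≥ 2 and let G = K_{4l,4l} be a complete bipartite graph with vertex set V(G) ⊆ [n], edge-colored so that each edge e receives a color z_e ∈ [n] \ e with all colors pairwise distinct (G is rainbow colored). Then G contains a strongly rainbow colored cycle of length 2l; consequently, the 3-uniform extension G* = {e ∪ {z_e} : e ∈ G} contains a loose 2l-cycle. -/

import Mathlib

/-- A hypergraph `H` contains a loose `k`-cycle. -/
def HasLooseCycle (k : ℕ) (H : Finset (Finset ℕ)) : Prop :=
  ∃ (e : ZMod k → Finset ℕ) (v : ZMod k → ℕ),
    Function.Injective e ∧ Function.Injective v ∧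
    (∀ i, e i ∈ H) ∧
    (∀ i, e i ∩ e (i + 1) = ({v i} : Finset ℕ)) ∧
    (∀ i j, j ≠ i → j ≠ i + 1 → i ≠ j + 1 → e i ∩ e j = ∅)

/-- The edge set of the complete bipartite graph with parts `A` and `B`. -/
def completeBipartiteEdges (A B : Finset ℕ) : Finset (Finset ℕ) :=
  (A ×ˢ B).image fun p => ({p.1, p.2} : Finset ℕ)

/-- The extension of an edge-colored graph: each edge `e` becomes `e ∪ {χ e}`. -/
def Extension (G : Finset (Finset ℕ)) (χ : Finset ℕ → ℕ) : Finset (Finset ℕ) :=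
  G.image fun e => insert (χ e) e

/-- An edge-colored graph `G` (with coloring `χ`) contains a strongly rainbow colored
cycle of length `m`. -/
def HasStronglyRainbowCycle (m : ℕ) (G : Finset (Finset ℕ)) (χ : Finset ℕ → ℕ) : Prop :=
  ∃ x : ZMod m → ℕ, Function.Injective x ∧
    (∀ i, ({x i, x (i + 1)} : Finset ℕ) ∈ G) ∧
    (Function.Injective fun i => χ ({x i, x (i + 1)} : Finset ℕ)) ∧
    (∀ i j, χ ({x i, x (i + 1)} : Finset ℕ) ≠ x j)

/-- A rainbow colored `K_{4l,4l}` with vertices in `[n]` contains a strongly rainbow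
colored cycle of length `2l`; consequently its extension contains a loose `2l`-cycle. -/
theorem rainbow_K4l4l_yields_loose_cycle (l n : ℕ) (hl : 2 ≤ l)
    (A B : Finset ℕ) (hA : A ⊆ Finset.Icc 1 n) (hB : B ⊆ Finset.Icc 1 n)
    (hAB : Disjoint A B) (hAc : A.card = 4 * l) (hBc : B.card = 4 * l)
    (G : Finset (Finset ℕ)) (hG : G = completeBipartiteEdges A B)
    (χ : Finset ℕ → ℕ) (hχ : ∀ e ∈ G, χ e ∈ Finset.Icc 1 n ∧ χ e ∉ e)
    (hrainbow : ∀ e ∈ G, ∀ f ∈ G, χ e = χ f → e = f) :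
    HasStronglyRainbowCycle (2 * l) G χ ∧ HasLooseCycle (2 * l) (Extension G χ) := by
  unfold HasStronglyRainbowCycle HasLooseCycle Extension
  simp only [completeBipartiteEdges] at hG
  classical
  set m := 2 * l with hm
  haveI : NeZero m := ⟨by omega⟩
  haveI : Fact (1 < m) := ⟨by omega⟩
  have hmemG : ∀ a ∈ A, ∀ b ∈ B, ({a, b} : Finset ℕ) ∈ G := by
    intro a ha b hb
    rw [hG]
    exact Finset.mem_image.2 ⟨(a, b), Finset.mem_product.2 ⟨ha, hb⟩, rfl⟩
  have hGAB : ∀ e ∈ G, ∃ a ∈ A, ∃ b ∈ B, e = {a, b} := by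
    intro e he
    rw [hG] at he
    obtain ⟨p, hp, rfl⟩ := Finset.mem_image.1 he
    exact ⟨p.1, (Finset.mem_product.1 hp).1, p.2, (Finset.mem_product.1 hp).2, rfl⟩
  have hcapB : ∀ e ∈ G, (e ∩ B).card ≤ 1 := by
    intro e he
    obtain ⟨a, ha, b, hb, rfl⟩ := hGAB e he
    refine le_trans (Finset.card_le_card (fun t ht => ?_)) (Finset.card_singleton b).le
    simp only [Finset.mem_inter, Finset.mem_insert, Finset.mem_singleton] at ht ⊢
    rcases ht.1 with rfl | rfl
    · exact absurd ht.2 (Finset.disjoint_left.1 hAB ha)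
    · rfl
  have hcapA : ∀ e ∈ G, (e ∩ A).card ≤ 1 := by
    intro e he
    obtain ⟨a, ha, b, hb, rfl⟩ := hGAB e he
    refine le_trans (Finset.card_le_card (fun t ht => ?_)) (Finset.card_singleton a).le
    simp only [Finset.mem_inter, Finset.mem_insert, Finset.mem_singleton] at ht ⊢
    rcases ht.1 with rfl | rfl
    · rfl
    · exact absurd ht.2 (Finset.disjoint_right.1 hAB hb)
  -- step 1 : A₁
  obtain ⟨A₁, hA₁sub, hA₁card⟩ := Finset.exists_subset_card_eq (s := A) (n := 2 * l) (by omega)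
  -- bad B vertices
  set T₁ := (G.filter fun e => χ e ∈ A₁).biUnion (fun e => e ∩ B) with hT₁
  have hfil₁ : (G.filter fun e => χ e ∈ A₁).card ≤ 2 * l := by
    calc (G.filter fun e => χ e ∈ A₁).card ≤ A₁.card :=
          Finset.card_le_card_of_injOn χ (fun e he => (Finset.mem_filter.1 he).2)
            (fun e he f hf h => hrainbow e (Finset.mem_filter.1 (by exact_mod_cast he)).1 f
              (Finset.mem_filter.1 (by exact_mod_cast hf)).1 h)
      _ = 2 * l := hA₁card
  have hT₁card : T₁.card ≤ 2 * l := by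
    calc T₁.card ≤ ∑ e ∈ (G.filter fun e => χ e ∈ A₁), (e ∩ B).card := Finset.card_biUnion_le
      _ ≤ ∑ _e ∈ (G.filter fun e => χ e ∈ A₁), 1 :=
          Finset.sum_le_sum (fun e he => hcapB e (Finset.mem_filter.1 he).1)
      _ = (G.filter fun e => χ e ∈ A₁).card := by simp
      _ ≤ 2 * l := hfil₁
  have hBT : l ≤ (B \ T₁).card := by
    have := Finset.card_le_card_sdiff_add_card (s := B) (t := T₁)
    omega
  obtain ⟨B', hB'sub, hB'card⟩ := Finset.exists_subset_card_eq (s := B \ T₁) (n := l) hBT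
  set T₂ := (G.filter fun e => χ e ∈ B').biUnion (fun e => e ∩ A) with hT₂
  have hfil₂ : (G.filter fun e => χ e ∈ B').card ≤ l := by
    calc (G.filter fun e => χ e ∈ B').card ≤ B'.card :=
          Finset.card_le_card_of_injOn χ (fun e he => (Finset.mem_filter.1 he).2)
            (fun e he f hf h => hrainbow e (Finset.mem_filter.1 (by exact_mod_cast he)).1 f
              (Finset.mem_filter.1 (by exact_mod_cast hf)).1 h)
      _ = l := hB'card
  have hT₂card : T₂.card ≤ l := by
    calc T₂.card ≤ ∑ e ∈ (G.filter fun e => χ e ∈ B'), (e ∩ A).card := Finset.card_biUnion_le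
      _ ≤ ∑ _e ∈ (G.filter fun e => χ e ∈ B'), 1 :=
          Finset.sum_le_sum (fun e he => hcapA e (Finset.mem_filter.1 he).1)
      _ = (G.filter fun e => χ e ∈ B').card := by simp
      _ ≤ l := hfil₂
  have hAT : l ≤ (A₁ \ T₂).card := by
    have := Finset.card_le_card_sdiff_add_card (s := A₁) (t := T₂)
    omega
  obtain ⟨A'', hA''sub, hA''card⟩ := Finset.exists_subset_card_eq (s := A₁ \ T₂) (n := l) hAT
  have hA''A : A'' ⊆ A := fun t ht => hA₁sub (Finset.mem_sdiff.1 (hA''sub ht)).1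
  have hB'B : B' ⊆ B := fun t ht => (Finset.mem_sdiff.1 (hB'sub ht)).1
  -- key property
  have hkey : ∀ a ∈ A'', ∀ b ∈ B', ∀ v, (v ∈ A'' ∨ v ∈ B') →
      χ ({a, b} : Finset ℕ) ≠ v := by
    intro a ha b hb v hv hcontra
    have heG : ({a, b} : Finset ℕ) ∈ G := hmemG a (hA''A ha) b (hB'B hb)
    rcases hv with hv | hv
    · -- color in A'' ⊆ A₁ : then b ∈ T₁, contradiction
      have hvA₁ : χ ({a, b} : Finset ℕ) ∈ A₁ := by
        rw [hcontra]; exact (Finset.mem_sdiff.1 (hA''sub hv)).1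
      have hbT₁ : b ∈ T₁ := Finset.mem_biUnion.2 ⟨{a, b}, Finset.mem_filter.2 ⟨heG, hvA₁⟩,
        Finset.mem_inter.2 ⟨by simp, hB'B hb⟩⟩
      exact (Finset.mem_sdiff.1 (hB'sub hb)).2 hbT₁
    · -- color in B' : then a ∈ T₂, contradiction
      have hvB' : χ ({a, b} : Finset ℕ) ∈ B' := by rw [hcontra]; exact hv
      have haT₂ : a ∈ T₂ := Finset.mem_biUnion.2 ⟨{a, b}, Finset.mem_filter.2 ⟨heG, hvB'⟩,
        Finset.mem_inter.2 ⟨by simp, hA''A ha⟩⟩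
      exact (Finset.mem_sdiff.1 (hA''sub ha)).2 haT₂
  -- build the cycle
  have hdiv : ∀ i : ZMod m, i.val / 2 < l := by
    intro i
    have := ZMod.val_lt i
    omega
  set x : ZMod m → ℕ := fun i =>
    if i.val % 2 = 0 then (A''.orderIsoOfFin hA''card ⟨i.val / 2, hdiv i⟩ : ℕ)
    else (B'.orderIsoOfFin hB'card ⟨i.val / 2, hdiv i⟩ : ℕ) with hxdef
  have hxA : ∀ i : ZMod m, i.val % 2 = 0 → x i ∈ A'' := by
    intro i h
    simp only [hxdef, if_pos h]
    exact (A''.orderIsoOfFin hA''card _).2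
  have hxB : ∀ i : ZMod m, ¬ i.val % 2 = 0 → x i ∈ B' := by
    intro i h
    simp only [hxdef, if_neg h]
    exact (B'.orderIsoOfFin hB'card _).2
  have hstep : ∀ i : ZMod m, (i + 1).val = i.val + 1 ∨ (i.val = m - 1 ∧ (i + 1).val = 0) := by
    intro i
    have h1 : (i + 1).val = (i.val + 1) % m := by rw [ZMod.val_add, ZMod.val_one]
    have h2 := ZMod.val_lt i
    rcases Nat.lt_or_ge (i.val + 1) m with h | h
    · left; rw [Nat.mod_eq_of_lt h] at h1; exact h1
    · right
      have h3 : i.val + 1 = m := by omega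
      constructor
      · omega
      · rw [h1, h3, Nat.mod_self]
  have hpar : ∀ i : ZMod m, (i + 1).val % 2 = 0 ↔ ¬ i.val % 2 = 0 := by
    intro i
    rcases hstep i with h | ⟨h1, h2⟩ <;> omega
  have hABdisj : ∀ u, u ∈ A'' → u ∈ B' → False := fun u hu hv =>
    Finset.disjoint_left.1 hAB (hA''A hu) (hB'B hv)
  have hxinj : Function.Injective x := by
    intro i j h
    apply ZMod.val_injective m
    by_cases hi : i.val % 2 = 0 <;> by_cases hj : j.val % 2 = 0
    · simp only [hxdef, if_pos hi, if_pos hj] at h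
      have h2 := (A''.orderIsoOfFin hA''card).injective (Subtype.ext h)
      have h3 : i.val / 2 = j.val / 2 := congrArg Fin.val h2
      omega
    · exact (hABdisj _ (h ▸ hxA i hi) (hxB j hj)).elim
    · exact (hABdisj _ (hxA j hj) (h ▸ hxB i hi)).elim
    · simp only [hxdef, if_neg hi, if_neg hj] at h
      have h2 := (B'.orderIsoOfFin hB'card).injective (Subtype.ext h)
      have h3 : i.val / 2 = j.val / 2 := congrArg Fin.val h2
      omega
  -- edges of the cycle lie in G
  have hxG : ∀ i : ZMod m, ({x i, x (i + 1)} : Finset ℕ) ∈ G := by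
    intro i
    by_cases hi : i.val % 2 = 0
    · exact hmemG _ (hA''A (hxA i hi)) _ (hB'B (hxB (i + 1) (fun h => ((hpar i).1 h) hi)))
    · rw [Finset.pair_comm]
      exact hmemG _ (hA''A (hxA (i + 1) ((hpar i).2 hi))) _ (hB'B (hxB i hi))
  -- colors avoid all cycle vertices
  have hxmem : ∀ j : ZMod m, x j ∈ A'' ∨ x j ∈ B' := by
    intro j
    by_cases hj : j.val % 2 = 0
    · exact Or.inl (hxA j hj)
    · exact Or.inr (hxB j hj)
  have hχnotin : ∀ i j : ZMod m, χ ({x i, x (i + 1)} : Finset ℕ) ≠ x j := by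
    intro i j
    by_cases hi : i.val % 2 = 0
    · exact hkey _ (hxA i hi) _ (hxB (i + 1) (fun h => ((hpar i).1 h) hi)) _ (hxmem j)
    · rw [Finset.pair_comm]
      exact hkey _ (hxA (i + 1) ((hpar i).2 hi)) _ (hxB i hi) _ (hxmem j)
  -- simple ZMod facts
  have hne1 : ∀ i : ZMod m, i + 1 ≠ i := by
    intro i h
    have h1 := congrArg ZMod.val h
    rcases hstep i with h2 | ⟨h2, h3⟩ <;> omega
  have hne2 : ∀ i : ZMod m, i + 1 + 1 ≠ i := by
    intro i h
    have h1 := congrArg ZMod.val h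
    have h4 := ZMod.val_lt i
    rcases hstep i with h2 | ⟨h2, h3⟩ <;> rcases hstep (i + 1) with h5 | ⟨h5, h6⟩ <;> omega
  -- the cycle edges are pairwise distinct
  have hEinj : ∀ i j : ZMod m, ({x i, x (i + 1)} : Finset ℕ) = {x j, x (j + 1)} → i = j := by
    intro i j h
    have h1 : x i = x j ∨ x i = x (j + 1) := by
      have : x i ∈ ({x j, x (j + 1)} : Finset ℕ) := h ▸ (by simp)
      simpa using this
    have h2 : x (i + 1) = x j ∨ x (i + 1) = x (j + 1) := by
      have : x (i + 1) ∈ ({x j, x (j + 1)} : Finset ℕ) := h ▸ (by simp)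
      simpa using this
    rcases h1 with h1 | h1
    · exact hxinj h1
    rcases h2 with h2 | h2
    · -- i = j + 1 and i + 1 = j : contradiction
      have e1 : i = j + 1 := hxinj h1
      have e2 : i + 1 = j := hxinj h2
      exact absurd (by rw [e1] at e2; exact e2) (hne2 j)
    · exact add_right_cancel (hxinj h2)
  have hcinj : Function.Injective (fun i : ZMod m => χ ({x i, x (i + 1)} : Finset ℕ)) :=
    fun i j h => hEinj i j (hrainbow _ (hxG i) _ (hxG j) h)
  refine ⟨⟨x, hxinj, hxG, hcinj, hχnotin⟩, ?_⟩
  -- loose cycle in the extension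
  refine ⟨fun i => insert (χ ({x i, x (i + 1)} : Finset ℕ)) {x i, x (i + 1)},
    fun i => x (i + 1), ?_, ?_, ?_, ?_, ?_⟩
  · -- e injective
    intro i j h
    have h' : insert (χ ({x i, x (i + 1)} : Finset ℕ)) ({x i, x (i + 1)} : Finset ℕ) =
        insert (χ ({x j, x (j + 1)} : Finset ℕ)) ({x j, x (j + 1)} : Finset ℕ) := h
    have hc : χ ({x i, x (i + 1)} : Finset ℕ) ∈
        insert (χ ({x j, x (j + 1)} : Finset ℕ)) ({x j, x (j + 1)} : Finset ℕ) :=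
      h' ▸ Finset.mem_insert_self _ _
    simp only [Finset.mem_insert, Finset.mem_singleton] at hc
    rcases hc with hc | hc | hc
    · exact hcinj hc
    · exact absurd hc (hχnotin i j)
    · exact absurd hc (hχnotin i (j + 1))
  · -- v injective
    exact fun i j h => add_right_cancel (hxinj h)
  · -- membership in extension
    intro i
    exact Finset.mem_image.2 ⟨{x i, x (i + 1)}, hxG i, rfl⟩
  · -- consecutive intersections
    intro i
    ext t
    simp only [Finset.mem_inter, Finset.mem_insert, Finset.mem_singleton]
    constructor
    · rintro ⟨rfl | rfl | rfl, h2 | h2 | h2⟩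
      · exact absurd (hcinj h2) (fun h => hne1 i h.symm)
      · exact absurd h2 (hχnotin i (i + 1))
      · exact absurd h2 (hχnotin i (i + 1 + 1))
      · exact absurd h2.symm (hχnotin (i + 1) i)
      · exact absurd (hxinj h2) (fun h => hne1 i h.symm)
      · exact absurd (hxinj h2) (fun h => hne2 i h.symm)
      · exact absurd h2.symm (hχnotin (i + 1) (i + 1))
      · rfl
      · exact absurd (hxinj h2).symm (hne1 (i + 1))
    · rintro rfl
      exact ⟨Or.inr (Or.inr rfl), Or.inr (Or.inl rfl)⟩
  · -- disjoint non-consecutive edges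
    intro i j hji hji1 hij1
    rw [Finset.eq_empty_iff_forall_notMem]
    intro t ht
    simp only [Finset.mem_inter, Finset.mem_insert, Finset.mem_singleton] at ht
    obtain ⟨h1 | h1 | h1, h2 | h2 | h2⟩ := ht
    · exact hji (hcinj (h1.symm.trans h2)).symm
    · exact hχnotin i j (h1.symm.trans h2)
    · exact hχnotin i (j + 1) (h1.symm.trans h2)
    · exact hχnotin j i (h2.symm.trans h1)
    · exact hji (hxinj (h1.symm.trans h2)).symm
    · exact hij1 (hxinj (h1.symm.trans h2))
    · exact hχnotin j (i + 1) (h2.symm.trans h1)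
    · exact hji1 (hxinj (h1.symm.trans h2)).symm
    · exact hji (add_right_cancel (hxinj (h1.symm.trans h2))).symm
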